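/- The standard deviation of the distance between two independent uniform random points on the unit sphere decays like 1/√(2d): writing ξ_μ(d) = 2^{d−1} (Γ(d/2))² / (√π · Γ(d − 1/2)) and ξ_σ(d) = √(2 − ξ_μ(d)²), one has lim_{d→∞} √(2d) · ξ_σ(d) = 1, where the limit is taken over integers d → ∞. -/

import Mathlib

open Real Filter Topology

noncomputable def cb (m : ℕ) : ℝ := (Nat.centralBinom m : ℝ) / 4 ^ m

lemma cb_pos (m : ℕ) : 0 < cb m := by
  unfold cb
  exact div_pos (by exact_mod_cast Nat.centralBinom_pos m) (by positivity)

lemma factorial_two_mul (m : ℕ) :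
    ((2 * m).factorial : ℝ) = cb m * 4 ^ m * (m.factorial : ℝ) ^ 2 := by
  have h := Nat.choose_mul_factorial_mul_factorial (Nat.le_mul_of_pos_left m (by norm_num) : m ≤ 2 * m)
  have h2 : 2 * m - m = m := by omega
  rw [h2] at h
  have : ((2*m).choose m : ℝ) * (m.factorial : ℝ) * (m.factorial : ℝ) = ((2*m).factorial : ℝ) := by
    exact_mod_cast congrArg Nat.cast h
  rw [← this]
  unfold cb Nat.centralBinom
  field_simp

lemma cb_succ (m : ℕ) : cb (m + 1) = cb m * (2 * m + 1) / (2 * m + 2) := by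
  have h := Nat.succ_mul_centralBinom_succ m
  have h2 : ((m:ℝ) + 1) * (Nat.centralBinom (m+1) : ℝ) = 2 * (2 * m + 1) * (Nat.centralBinom m : ℝ) := by
    exact_mod_cast congrArg Nat.cast h
  unfold cb
  rw [pow_succ]
  have hm : ((m:ℝ) + 1) ≠ 0 := by positivity
  field_simp
  linear_combination 2 * h2

lemma Gamma_nat_add_half (m : ℕ) :
    Real.Gamma ((m:ℝ) + 1/2) = Real.sqrt π * ((2*m).factorial : ℝ) / (4 ^ m * (m.factorial : ℝ)) := by
  induction m with
  | zero => simpa using Real.Gamma_one_half_eq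
  | succ n ih =>
    have hne : ((n:ℝ) + 1/2) ≠ 0 := by positivity
    have h1 : ((n+1 : ℕ):ℝ) + 1/2 = ((n:ℝ) + 1/2) + 1 := by push_cast; ring
    rw [h1, Real.Gamma_add_one hne, ih]
    have hf1 : ((2*(n+1)).factorial : ℝ) = (2*n+2) * (2*n+1) * ((2*n).factorial : ℝ) := by
      have : 2*(n+1) = (2*n+1) + 1 := by ring
      rw [this, Nat.factorial_succ, Nat.factorial_succ]
      push_cast; ring
    have hf2 : (((n+1)).factorial : ℝ) = (n+1) * (n.factorial : ℝ) := by
      rw [Nat.factorial_succ]; push_cast; ring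
    rw [hf1, hf2]
    have h4 : (4:ℝ)^n ≠ 0 := by positivity
    have hfn : ((n.factorial : ℕ):ℝ) ≠ 0 := by exact_mod_cast Nat.factorial_ne_zero n
    rw [pow_succ]
    field_simp
    ring

noncomputable def B (m : ℕ) : ℝ := π * ((m:ℝ) + 1/4) * cb m ^ 2

lemma stirling_cb (m : ℕ) (hm : 1 ≤ m) :
    Stirling.stirlingSeq (2*m) = cb m * Stirling.stirlingSeq m ^ 2 * Real.sqrt m := by
  have hm0 : (0:ℝ) < m := by exact_mod_cast hm
  have hSm : Stirling.stirlingSeq m ^ 2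
      = (m.factorial:ℝ)^2 / ((2*m) * (((m:ℝ)/Real.exp 1)^m)^2) := by
    unfold Stirling.stirlingSeq
    rw [div_pow, mul_pow, Real.sq_sqrt (by positivity)]
  have e1 : (((2*m : ℕ):ℝ)/Real.exp 1) ^ (2*m) = 4^m * (((m:ℝ)/Real.exp 1)^m)^2 := by
    push_cast
    rw [pow_mul, ← pow_mul (((m:ℝ)/Real.exp 1)) , mul_comm m 2, pow_mul]
    rw [← mul_pow]
    congr 1
    rw [div_pow, div_pow]
    field_simp
    ring
  have e2 : Real.sqrt (2*(2*m:ℕ) : ℝ) = 2 * Real.sqrt m := by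
    rw [show (2*(2*m:ℕ):ℝ) = (2:ℝ)^2 * m by push_cast; ring, Real.sqrt_mul (by positivity),
      Real.sqrt_sq (by norm_num)]
  rw [hSm]
  unfold Stirling.stirlingSeq
  rw [factorial_two_mul, e1, e2]
  have h1 : Real.sqrt m ≠ 0 := by positivity
  have h2 : (((m:ℕ) : ℝ)/Real.exp 1)^m ≠ 0 := by positivity
  have h5 : Real.sqrt m * Real.sqrt m = (m:ℝ) := Real.mul_self_sqrt (by positivity)
  field_simp
  linear_combination (-cb m) * h5

lemma tendsto_B : Tendsto B atTop (𝓝 1) := by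
  have h2m : Tendsto (fun m : ℕ => 2*m) atTop atTop :=
    Filter.tendsto_id.const_mul_atTop' two_pos
  have hS2 : Tendsto (fun m : ℕ => Stirling.stirlingSeq (2*m)) atTop (𝓝 (Real.sqrt π)) :=
    Stirling.tendsto_stirlingSeq_sqrt_pi.comp h2m
  have hSsq : Tendsto (fun m : ℕ => Stirling.stirlingSeq m ^ 2) atTop (𝓝 π) := by
    have := Stirling.tendsto_stirlingSeq_sqrt_pi.pow 2
    rwa [Real.sq_sqrt pi_nonneg] at this
  have hq : Tendsto (fun m : ℕ => Stirling.stirlingSeq (2*m) / Stirling.stirlingSeq m ^ 2)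
      atTop (𝓝 (Real.sqrt π / π)) := hS2.div hSsq pi_ne_zero
  have hrat : Tendsto (fun m : ℕ => ((m:ℝ) + 1/4)/m) atTop (𝓝 1) := by
    have h0 := tendsto_one_div_atTop_nhds_zero_nat (𝕜 := ℝ)
    have h1 : Tendsto (fun m : ℕ => 1 + (1/4) * (1/(m:ℝ))) atTop (𝓝 (1 + (1/4) * 0)) :=
      tendsto_const_nhds.add (tendsto_const_nhds.mul h0)
    rw [show (1:ℝ) + (1/4) * 0 = 1 by ring] at h1
    refine h1.congr' ?_
    filter_upwards [eventually_ge_atTop 1] with m hm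
    have : ((m:ℝ)) ≠ 0 := by
      have : (0:ℝ) < m := by exact_mod_cast hm
      positivity
    field_simp
  have hmain : Tendsto (fun m : ℕ =>
      (π * (((m:ℝ) + 1/4)/m)) * (Stirling.stirlingSeq (2*m) / Stirling.stirlingSeq m ^ 2)^2)
      atTop (𝓝 ((π * 1) * (Real.sqrt π / π)^2)) :=
    ((tendsto_const_nhds.mul hrat)).mul (hq.pow 2)
  have hval : (π * 1) * (Real.sqrt π / π)^2 = 1 := by
    rw [div_pow, Real.sq_sqrt pi_nonneg]
    field_simp
  rw [hval] at hmain
  refine hmain.congr' ?_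
  filter_upwards [eventually_ge_atTop 1] with m hm
  have hm0 : (0:ℝ) < m := by exact_mod_cast hm
  have hs := stirling_cb m hm
  have hSpos : 0 < Stirling.stirlingSeq m := by
    obtain ⟨k, rfl⟩ : ∃ k, m = k + 1 := ⟨m - 1, by omega⟩
    exact Stirling.stirlingSeq'_pos k
  have hred : Stirling.stirlingSeq (2*m) / Stirling.stirlingSeq m ^ 2 = cb m * Real.sqrt m := by
    rw [hs]; field_simp
  rw [hred]
  unfold B
  rw [mul_pow, Real.sq_sqrt hm0.le]
  field_simp

lemma B_pos (m : ℕ) : 0 < B m := by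
  unfold B
  have := cb_pos m
  have := pi_pos
  positivity

lemma B_mono : Monotone B := by
  apply monotone_nat_of_le_succ
  intro m
  unfold B
  rw [cb_succ]
  rw [div_pow, mul_pow]
  have h1 : (0:ℝ) < (2*(m:ℝ)+2)^2 := by positivity
  rw [show π * ((↑(m+1):ℝ) + 1/4) * (cb m ^2 * (2*(m:ℝ)+1)^2/(2*(m:ℝ)+2)^2)
      = (π * (((m:ℝ)+1) + 1/4) * (cb m^2*(2*(m:ℝ)+1)^2))/(2*(m:ℝ)+2)^2 by push_cast; ring,
    le_div_iff₀ h1]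
  nlinarith [mul_pos pi_pos (pow_pos (cb_pos m) 2)]

lemma B_le_one (m : ℕ) : B m ≤ 1 := B_mono.ge_of_tendsto tendsto_B m

lemma B_lower {ε : ℝ} (hε : 0 < ε) :
    ∀ᶠ m : ℕ in atTop, 1 ≤ π * ((m:ℝ) + 1/4 + ε) * cb m ^ 2 := by
  set C : ℕ → ℝ := fun m => π * ((m:ℝ) + 1/4 + ε) * cb m ^ 2 with hC
  have htC : Tendsto C atTop (𝓝 1) := by
    have h0 : Tendsto (fun m : ℕ => ((m:ℝ) + 1/4)⁻¹) atTop (𝓝 0) := by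
      apply Tendsto.inv_tendsto_atTop
      exact tendsto_atTop_add_const_right atTop (1/4) tendsto_natCast_atTop_atTop
    have h1 : Tendsto (fun m : ℕ => B m * (1 + ε * ((m:ℝ) + 1/4)⁻¹)) atTop
        (𝓝 (1 * (1 + ε * 0))) :=
      tendsto_B.mul (tendsto_const_nhds.add (tendsto_const_nhds.mul h0))
    rw [show (1:ℝ) * (1 + ε * 0) = 1 by ring] at h1
    refine h1.congr (fun m => ?_)
    unfold B
    have hm : ((m:ℝ) + 1/4) ≠ 0 := by positivity
    field_simp [hC]
    ring
  -- eventually antitone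
  obtain ⟨N, hN⟩ := exists_nat_ge (1/(16*ε))
  have anti : ∀ k, N ≤ k → C (k+1) ≤ C k := by
    intro k hk
    have hkR : (1/(16*ε) : ℝ) ≤ k := le_trans hN (by exact_mod_cast hk)
    have hk4 : (1:ℝ)/4 ≤ 4*ε*k + 3*ε := by
      have h44 : 4*ε*(1/(16*ε)) = 1/4 := by field_simp; ring
      nlinarith [mul_le_mul_of_nonneg_left hkR (by linarith : (0:ℝ) ≤ 4*ε)]
    simp only [hC]
    rw [cb_succ, div_pow, mul_pow]
    have h1 : (0:ℝ) < (2*(k:ℝ)+2)^2 := by positivity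
    rw [show π * ((↑(k+1):ℝ) + 1/4 + ε) * (cb k ^2 * (2*(k:ℝ)+1)^2/(2*(k:ℝ)+2)^2)
        = (π * (((k:ℝ)+1) + 1/4 + ε) * (cb k^2*(2*(k:ℝ)+1)^2))/(2*(k:ℝ)+2)^2 by push_cast; ring,
      div_le_iff₀ h1]
    nlinarith [mul_pos pi_pos (pow_pos (cb_pos k) 2)]
  have chain : ∀ m, N ≤ m → ∀ k, m ≤ k → C k ≤ C m := by
    intro m hm k hk
    induction k, hk using Nat.le_induction with
    | base => exact le_refl _
    | succ n hn ih => exact le_trans (anti n (le_trans hm hn)) ih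
  filter_upwards [eventually_ge_atTop N] with m hm
  exact le_of_tendsto htC (eventually_atTop.2 ⟨m, fun k hk => chain m hm k hk⟩)

lemma tendsto_K : Tendsto (fun m : ℕ => (m:ℝ) * (1 - B m)) atTop (𝓝 0) := by
  rw [Metric.tendsto_atTop]
  intro ε hε
  have h2 : (0:ℝ) < ε/2 := by linarith
  obtain ⟨N, hN⟩ := eventually_atTop.1 (B_lower h2)
  refine ⟨N + 1, fun m hm => ?_⟩
  have h1 := hN m (by omega)
  have h2' := B_le_one m
  have hm1 : (1:ℝ) ≤ m := by exact_mod_cast Nat.one_le_iff_ne_zero.2 (by omega)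
  have hcb := cb_pos m
  have hBdef : B m = π * ((m:ℝ) + 1/4) * cb m ^ 2 := rfl
  have hub : (m:ℝ) * (1 - B m) ≤ ε/2 := by
    have hπc : π * cb m ^ 2 * ((m:ℝ) + 1/4) ≤ 1 := by rw [hBdef] at h2'; nlinarith
    have hlow : 1 - B m ≤ (ε/2) * (π * cb m ^ 2) := by rw [hBdef]; nlinarith
    have hπc2 : (m:ℝ) * (π * cb m ^ 2) ≤ 1 := by nlinarith [mul_pos pi_pos (pow_pos hcb 2)]
    calc (m:ℝ) * (1 - B m) ≤ (m:ℝ) * ((ε/2) * (π * cb m ^ 2)) := by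
          apply mul_le_mul_of_nonneg_left hlow (by linarith)
      _ = (ε/2) * ((m:ℝ) * (π * cb m ^ 2)) := by ring
      _ ≤ (ε/2) * 1 := by apply mul_le_mul_of_nonneg_left hπc2 (by linarith)
      _ = ε/2 := by ring
  have hlb : 0 ≤ (m:ℝ) * (1 - B m) := by
    have := B_le_one m
    nlinarith
  rw [Real.dist_eq, sub_zero, abs_of_nonneg hlb]
  linarith

noncomputable def xi (d : ℕ) : ℝ :=
  (2:ℝ)^((d:ℝ)-1) * Real.Gamma ((d:ℝ)/2)^2 / (Real.sqrt π * Real.Gamma ((d:ℝ)-1/2))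

lemma sqrtpi_sq : Real.sqrt π * Real.sqrt π = π := Real.mul_self_sqrt pi_nonneg

lemma four_pow (k : ℕ) : (4:ℝ)^k = 2^(2*k) := by
  rw [show (4:ℝ) = 2^2 by norm_num, ← pow_mul]

lemma xi_even (m : ℕ) : xi (2*m+2) = 1/(π*((m:ℝ)+1)*cb (m+1)*cb (2*m+1)) := by
  unfold xi
  have h1 : ((2*m+2 : ℕ):ℝ) = 2*(m:ℝ)+2 := by push_cast; ring
  rw [h1]
  rw [show (2*(m:ℝ)+2)/2 = (m:ℝ)+1 by ring]
  rw [Real.Gamma_nat_eq_factorial]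
  rw [show (2*(m:ℝ)+2) - 1/2 = ((2*m+1 : ℕ):ℝ) + 1/2 by push_cast; ring]
  rw [_root_.Gamma_nat_add_half]
  rw [show (2*(m:ℝ)+2) - 1 = ((2*m+1 : ℕ):ℝ) by push_cast; ring]
  rw [Real.rpow_natCast]
  have hf1 : ((2*(2*m+1)).factorial : ℝ) = cb (2*m+1) * 4^(2*m+1) * (((2*m+1).factorial : ℝ))^2 :=
    factorial_two_mul (2*m+1)
  have hf2 : ((2*(m+1)).factorial : ℝ) = cb (m+1) * 4^(m+1) * (((m+1).factorial : ℝ))^2 :=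
    factorial_two_mul (m+1)
  rw [show 2*(m+1) = 2*m+2 by ring] at hf2
  have hf3 : ((2*m+2).factorial : ℝ) = (2*(m:ℝ)+2) * ((2*m+1).factorial : ℝ) := by
    rw [show 2*m+2 = (2*m+1)+1 by ring, Nat.factorial_succ]; push_cast; ring
  have hf4 : (((m+1)).factorial : ℝ) = ((m:ℝ)+1) * (m.factorial : ℝ) := by
    rw [Nat.factorial_succ]; push_cast; ring
  have hG : ((2*m+1).factorial : ℝ)
      = cb (m+1) * 4^(m+1) * (((m:ℝ)+1) * (m.factorial : ℝ))^2 / (2*(m:ℝ)+2) := by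
    rw [← hf4]
    field_simp
    linear_combination hf2 - hf3
  have hsimp : ∀ X Y : ℝ, Real.sqrt π * (Real.sqrt π * X / Y) = π * X / Y := by
    intro X Y
    rw [mul_div_assoc', ← mul_assoc, sqrtpi_sq]
  rw [hsimp, hf1, hG]
  have hpos : (0:ℝ) < (m:ℝ) + 1 := by positivity
  have hc1 := cb_pos (m+1); have hc2 := cb_pos (2*m+1)
  have hfne : (m.factorial : ℝ) ≠ 0 := by exact_mod_cast Nat.factorial_ne_zero m
  have hppos := pi_pos
  have hfg : ((2*m+1).factorial : ℝ) ≠ 0 := by exact_mod_cast Nat.factorial_ne_zero (2*m+1)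
  simp only [four_pow]
  field_simp
  ring

lemma xi_odd (m : ℕ) : xi (2*m+3) = cb (m+1)/cb (2*m+2) := by
  unfold xi
  have h1 : ((2*m+3 : ℕ):ℝ) = 2*(m:ℝ)+3 := by push_cast; ring
  rw [h1]
  rw [show (2*(m:ℝ)+3)/2 = ((m+1 : ℕ):ℝ) + 1/2 by push_cast; ring]
  rw [_root_.Gamma_nat_add_half (m+1)]
  rw [show (2*(m:ℝ)+3) - 1/2 = ((2*m+2 : ℕ):ℝ) + 1/2 by push_cast; ring]
  rw [_root_.Gamma_nat_add_half (2*m+2)]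
  rw [show (2*(m:ℝ)+3) - 1 = ((2*m+2:ℕ):ℝ) by push_cast; ring, Real.rpow_natCast]
  have hsq : ∀ X Y : ℝ, (Real.sqrt π * X / Y)^2 = π * X^2/Y^2 := by
    intro X Y
    rw [div_pow, mul_pow, Real.sq_sqrt pi_nonneg]
  have hsimp : ∀ X Y : ℝ, Real.sqrt π * (Real.sqrt π * X / Y) = π * X / Y := by
    intro X Y
    rw [mul_div_assoc', ← mul_assoc, sqrtpi_sq]
  have key : ((2*m+2).factorial : ℝ) = cb (m+1) * 4^(m+1) * (((m+1).factorial:ℝ))^2 := by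
    rw [show 2*m+2 = 2*(m+1) by ring]
    exact factorial_two_mul (m+1)
  rw [hsq, hsimp, factorial_two_mul (m+1), factorial_two_mul (2*m+2), key]
  have hc1 := cb_pos (m+1); have hc2 := cb_pos (2*m+2)
  have hppos := pi_pos
  have hf1 : (((m+1)).factorial : ℝ) ≠ 0 := by exact_mod_cast Nat.factorial_ne_zero (m+1)
  have hf2 : (((2*m+2)).factorial : ℝ) ≠ 0 := by exact_mod_cast Nat.factorial_ne_zero (2*m+2)
  simp only [four_pow]
  field_simp
  ring

lemma glue {f : ℕ → ℝ} {a : ℝ}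
    (he : Tendsto (fun m => f (2*m+2)) atTop (𝓝 a))
    (ho : Tendsto (fun m => f (2*m+3)) atTop (𝓝 a)) : Tendsto f atTop (𝓝 a) := by
  rw [Metric.tendsto_atTop] at he ho ⊢
  intro ε hε
  obtain ⟨N₁, h₁⟩ := he ε hε
  obtain ⟨N₂, h₂⟩ := ho ε hε
  refine ⟨2*N₁+2*N₂+2, fun d hd => ?_⟩
  rcases Nat.even_or_odd d with ⟨k, hk⟩ | ⟨k, hk⟩
  · have hd2 : d = 2*(k-1)+2 := by omega
    rw [hd2]; exact h₁ _ (by omega)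
  · have hd2 : d = 2*(k-1)+3 := by omega
    rw [hd2]; exact h₂ _ (by omega)

-- component limits
lemma ht : Tendsto (fun m : ℕ => ((m:ℝ)+1)⁻¹) atTop (𝓝 0) :=
  Tendsto.inv_tendsto_atTop (tendsto_atTop_add_const_right atTop 1 tendsto_natCast_atTop_atTop)

lemma hx : Tendsto (fun m : ℕ => ((m:ℝ)+1)*(1 - B (m+1))) atTop (𝓝 0) := by
  have := tendsto_K.comp (tendsto_add_atTop_nat 1)
  refine this.congr (fun m => ?_)
  simp only [Function.comp]
  push_cast
  ring

lemma hy : Tendsto (fun m : ℕ => (2*(m:ℝ)+1)*(1 - B (2*m+1))) atTop (𝓝 0) := by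
  have h2m : Tendsto (fun m : ℕ => 2*m+1) atTop atTop :=
    tendsto_atTop_mono (fun m => by simp only [id_eq]; omega) tendsto_id
  have := tendsto_K.comp h2m
  refine this.congr (fun m => ?_)
  simp only [Function.comp]
  push_cast
  ring

lemma hz : Tendsto (fun m : ℕ => (2*(m:ℝ)+2)*(1 - B (2*m+2))) atTop (𝓝 0) := by
  have h2m : Tendsto (fun m : ℕ => 2*m+2) atTop atTop :=
    tendsto_atTop_mono (fun m => by simp only [id_eq]; omega) tendsto_id
  have := tendsto_K.comp h2m
  refine this.congr (fun m => ?_)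
  simp only [Function.comp]
  push_cast
  ring

lemma hB1 : Tendsto (fun m : ℕ => B (m+1)) atTop (𝓝 1) :=
  tendsto_B.comp (tendsto_add_atTop_nat 1)

lemma hB2 : Tendsto (fun m : ℕ => B (2*m+1)) atTop (𝓝 1) :=
  tendsto_B.comp (tendsto_atTop_mono (fun m => by simp only [id_eq]; omega) tendsto_id)

lemma hB3 : Tendsto (fun m : ℕ => B (2*m+2)) atTop (𝓝 1) :=
  tendsto_B.comp (tendsto_atTop_mono (fun m => by simp only [id_eq]; omega) tendsto_id)

lemma even_lim : Tendsto (fun m : ℕ => 2*((2*m+2 : ℕ):ℝ)*(2 - xi (2*m+2)^2)) atTop (𝓝 1) := by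
  set t : ℕ → ℝ := fun m => ((m:ℝ)+1)⁻¹ with htdef
  set x : ℕ → ℝ := fun m => ((m:ℝ)+1)*(1 - B (m+1)) with hxdef
  set y : ℕ → ℝ := fun m => (2*(m:ℝ)+1)*(1 - B (2*m+1)) with hydef
  have hG : Tendsto (fun m : ℕ =>
      (1 + (3/4)*t m - 8*x m - 8*(2 - t m)⁻¹*y m + 8*(x m*y m)*(t m*(2 - t m)⁻¹))
        / (B (m+1) * B (2*m+1))) atTop
      (𝓝 ((1 + (3/4)*0 - 8*0 - 8*(2 - 0)⁻¹*0 + 8*(0*0)*(0*(2 - 0)⁻¹)) / (1*1))) := by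
    have h2t : Tendsto (fun m : ℕ => (2 - t m)⁻¹) atTop (𝓝 ((2 - 0)⁻¹ : ℝ)) :=
      (tendsto_const_nhds.sub ht).inv₀ (by norm_num)
    refine Tendsto.div ?_ (hB1.mul hB2) (by norm_num)
    exact ((((tendsto_const_nhds.add (tendsto_const_nhds.mul ht)).sub
      (tendsto_const_nhds.mul hx)).sub
      ((tendsto_const_nhds.mul h2t).mul hy)).add
      (((tendsto_const_nhds.mul (hx.mul hy))).mul (ht.mul h2t)))
  have hval : ((1 + (3/4)*(0:ℝ) - 8*0 - 8*(2 - 0)⁻¹*0 + 8*(0*0)*(0*(2 - 0)⁻¹)) / (1*1)) = 1 := by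
    norm_num
  rw [hval] at hG
  refine hG.congr (fun m => ?_)
  rw [xi_even]
  have hm1 : ((m:ℝ)+1) ≠ 0 := by positivity
  have h2m1 : (2*(m:ℝ)+1) ≠ 0 := by positivity
  have hc1 := (cb_pos (m+1)).ne'
  have hc2 := (cb_pos (2*m+1)).ne'
  have hπ := pi_ne_zero
  have hBv1 : B (m+1) = π * (((m:ℝ)+1) + 1/4) * cb (m+1) ^ 2 := by
    unfold B; push_cast; ring
  have hBv2 : B (2*m+1) = π * ((2*(m:ℝ)+1) + 1/4) * cb (2*m+1) ^ 2 := by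
    unfold B; push_cast; ring
  have hinv : (2 - t m)⁻¹ = ((m:ℝ)+1)/(2*(m:ℝ)+1) := by
    rw [htdef]
    simp only
    rw [show 2 - ((m:ℝ)+1)⁻¹ = (2*(m:ℝ)+1)/((m:ℝ)+1) by field_simp; ring, inv_div]
  simp only [hxdef, hydef, htdef, hinv, hBv1, hBv2]
  push_cast
  have h2m1' : ((m:ℝ)+1)*2-1 ≠ 0 := by ring_nf; positivity
  field_simp
  ring

lemma odd_lim : Tendsto (fun m : ℕ => 2*((2*m+3 : ℕ):ℝ)*(2 - xi (2*m+3)^2)) atTop (𝓝 1) := by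
  set t : ℕ → ℝ := fun m => ((m:ℝ)+1)⁻¹ with htdef
  set x : ℕ → ℝ := fun m => ((m:ℝ)+1)*(1 - B (m+1)) with hxdef
  set z : ℕ → ℝ := fun m => (2*(m:ℝ)+2)*(1 - B (2*m+2)) with hzdef
  have hG : Tendsto (fun m : ℕ =>
      ((4 + 2*t m)*(1/4 + 2*x m - z m + t m*(x m - z m)/4))
        / (B (2*m+2) * (1 + t m/4))) atTop
      (𝓝 (((4 + 2*0)*(1/4 + 2*0 - 0 + 0*((0:ℝ) - 0)/4)) / (1 * (1 + 0/4)))) := by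
    refine Tendsto.div ?_ (hB3.mul (tendsto_const_nhds.add (ht.div_const 4))) (by norm_num)
    exact (tendsto_const_nhds.add (tendsto_const_nhds.mul ht)).mul
      (((tendsto_const_nhds.add (tendsto_const_nhds.mul hx)).sub hz).add
        ((ht.mul (hx.sub hz)).div_const 4))
  have hval : (((4 + 2*(0:ℝ))*(1/4 + 2*0 - 0 + 0*((0:ℝ) - 0)/4)) / (1 * (1 + 0/4))) = 1 := by
    norm_num
  rw [hval] at hG
  refine hG.congr (fun m => ?_)
  rw [xi_odd]
  have hm1 : ((m:ℝ)+1) ≠ 0 := by positivity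
  have hc1 := (cb_pos (m+1)).ne'
  have hc2 := (cb_pos (2*m+2)).ne'
  have hπ := pi_ne_zero
  have hBv1 : B (m+1) = π * (((m:ℝ)+1) + 1/4) * cb (m+1) ^ 2 := by
    unfold B; push_cast; ring
  have hBv3 : B (2*m+2) = π * ((2*(m:ℝ)+2) + 1/4) * cb (2*m+2) ^ 2 := by
    unfold B; push_cast; ring
  simp only [hxdef, hzdef, htdef, hBv1, hBv3]
  push_cast
  field_simp
  ring

/-- With `ξ_μ(d) = 2^{d−1} (Γ(d/2))² / (√π · Γ(d − 1/2))` the mean distance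
between two independent uniform random points on the unit sphere `S^{d−1} ⊂ ℝ^d`, and
`ξ_σ(d) = √(2 − ξ_μ(d)²)` the standard deviation of that distance, one has
`lim_{d→∞} √(2d) · ξ_σ(d) = 1`, the limit taken over integers `d → ∞`. -/
theorem distance_stddev_asymptotic :
    Tendsto
      (fun d : ℕ =>
        Real.sqrt (2 * d) *
          Real.sqrt (2 -
            ((2 : ℝ) ^ ((d : ℝ) - 1) * Real.Gamma ((d : ℝ) / 2) ^ 2
              / (Real.sqrt π * Real.Gamma ((d : ℝ) - 1 / 2))) ^ 2))
      atTop (nhds 1) := by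
  have hmain : Tendsto (fun d : ℕ => 2*(d:ℝ)*(2 - xi d^2)) atTop (𝓝 1) := by
    apply glue
    · exact even_lim
    · exact odd_lim
  have h2 := hmain.sqrt
  rw [Real.sqrt_one] at h2
  refine h2.congr (fun d => ?_)
  rw [Real.sqrt_mul (by positivity : (0:ℝ) ≤ 2*(d:ℝ))]
  rfl
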